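/- Let N be a torsion-free nilpotent group. Then the quotient N/Z(N) of N by its center is torsion-free. -/

import Mathlib

/-- A monoid is torsion-free if no nontrivial element has finite order
(the definition removed from Mathlib, restored with its old meaning). -/
def Monoid.IsTorsionFree (G : Type*) [Monoid G] : Prop :=
  ∀ g : G, g ≠ 1 → ¬IsOfFinOrder g

private lemma ucs_normal_conj {N : Type*} [Group N] {i : ℕ} {a : N} (g : N)
    (ha : a ∈ Subgroup.upperCentralSeries N i) : g * a * g⁻¹ ∈ Subgroup.upperCentralSeries N i :=
  Subgroup.Normal.conj_mem inferInstance a ha g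

/-- Key step: if `z ∈ Z_{i+1}` and `z^n ∈ Z_i` with `n > 0`, then `z ∈ Z_i`. -/
private lemma key {N : Type*} [Group N] (htf : Monoid.IsTorsionFree N) :
    ∀ i : ℕ, ∀ z : N, z ∈ Subgroup.upperCentralSeries N (i + 1) →
      ∀ n : ℕ, 0 < n → z ^ n ∈ Subgroup.upperCentralSeries N i → z ∈ Subgroup.upperCentralSeries N i := by
  intro i
  induction i with
  | zero =>
    intro z _ n hn hzn
    rw [Subgroup.upperCentralSeries_zero, Subgroup.mem_bot] at hzn ⊢
    by_contra hz
    exact htf z hz (isOfFinOrder_iff_pow_eq_one.mpr ⟨n, hn, hzn⟩)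
  | succ i ih =>
    intro z hz n hn hzn
    rw [Subgroup.mem_upperCentralSeries_succ_iff] at hz hzn ⊢
    intro y
    set c : N := z * y * z⁻¹ * y⁻¹ with hc
    have hcmem : c ∈ Subgroup.upperCentralSeries N (i + 1) := hz y
    -- claim: for all k, [z^k, y] * c^{-k} ∈ Z_i
    have claim : ∀ k : ℕ,
        (z ^ k * y * (z ^ k)⁻¹ * y⁻¹) * (c ^ k)⁻¹ ∈ Subgroup.upperCentralSeries N i := by
      intro k
      induction k with
      | zero => simpa using Subgroup.one_mem _
      | succ k ihk =>
        have hak : z ^ k * y * (z ^ k)⁻¹ * y⁻¹ ∈ Subgroup.upperCentralSeries N (i + 1) := by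
          have hzk : z ^ k ∈ Subgroup.upperCentralSeries N (i + 2) :=
            pow_mem (by rw [Subgroup.mem_upperCentralSeries_succ_iff]; exact hz) k
          exact (Subgroup.mem_upperCentralSeries_succ_iff.mp hzk) y
        set a : N := z ^ k * y * (z ^ k)⁻¹ * y⁻¹ with ha
        -- u := z * a * z⁻¹ * a⁻¹ ∈ Z_i since a ∈ Z_{i+1}
        have hu : z * a * z⁻¹ * a⁻¹ ∈ Subgroup.upperCentralSeries N i := by
          have h1 : a * z⁻¹ * a⁻¹ * (z⁻¹)⁻¹ ∈ Subgroup.upperCentralSeries N i :=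
            (Subgroup.mem_upperCentralSeries_succ_iff.mp hak) z⁻¹
          have h2 := ucs_normal_conj z h1
          convert h2 using 1
          group
        -- a_{k+1} = u * a * c
        have hstep : z ^ (k + 1) * y * (z ^ (k + 1))⁻¹ * y⁻¹
            = (z * a * z⁻¹ * a⁻¹) * (a * (c ^ k)⁻¹) * ((c ^ k) * c * (c ^ (k + 1))⁻¹) *
              (c ^ (k + 1)) := by
          rw [ha, hc]
          simp only [pow_succ]
          group
        have hck1 : (z ^ (k + 1) * y * (z ^ (k + 1))⁻¹ * y⁻¹) * (c ^ (k + 1))⁻¹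
            ∈ Subgroup.upperCentralSeries N i := by
          rw [hstep]
          have h3 : (c ^ k) * c * (c ^ (k + 1))⁻¹ = 1 := by rw [← pow_succ]; group
          rw [h3, mul_one, mul_inv_cancel_right]
          exact mul_mem hu ihk
        exact hck1
    -- [z^n, y] ∈ Z_i since z^n ∈ Z_{i+1}
    have han : z ^ n * y * (z ^ n)⁻¹ * y⁻¹ ∈ Subgroup.upperCentralSeries N i := hzn y
    have hcn : (c ^ n)⁻¹ ∈ Subgroup.upperCentralSeries N i := by
      have := mul_mem (inv_mem han) (claim n)
      convert this using 1
      group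
    -- apply ih to c
    exact ih c hcmem n hn (by simpa using inv_mem hcn)

/-- Let `N` be a torsion-free nilpotent group.  Then the quotient `N/Z(N)` of `N`
by its center is torsion-free. -/
theorem stmt_9 {N : Type*} [Group N] [Group.IsNilpotent N]
    (htf : Monoid.IsTorsionFree N) :
    Monoid.IsTorsionFree (N ⧸ Subgroup.center N) := by
  intro g hg hfin
  obtain ⟨x, rfl⟩ := QuotientGroup.mk_surjective g
  set n := orderOf ((x : N ⧸ Subgroup.center N)) with hn
  have hnpos : 0 < n := hfin.orderOf_pos
  have hxn : x ^ n ∈ Subgroup.center N := by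
    rw [← QuotientGroup.eq_one_iff, QuotientGroup.mk_pow]
    exact pow_orderOf_eq_one _
  have hxn1 : x ^ n ∈ Subgroup.upperCentralSeries N 1 := by
    rwa [Subgroup.upperCentralSeries_one]
  obtain ⟨m, hm⟩ := Group.IsNilpotent.nilpotent' (G := N)
  have hxm : x ∈ Subgroup.upperCentralSeries N (1 + m) := by
    have : x ∈ Subgroup.upperCentralSeries N m := by rw [hm]; trivial
    exact Subgroup.upperCentralSeries_mono N (Nat.le_add_left m 1) this
  have hdown : ∀ j : ℕ, x ∈ Subgroup.upperCentralSeries N (1 + j) → x ∈ Subgroup.upperCentralSeries N 1 := by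
    intro j
    induction j with
    | zero => exact fun h => h
    | succ j ihj =>
      intro h
      apply ihj
      exact key htf (1 + j) x (by rwa [← Nat.add_assoc] at h) n hnpos
        (Subgroup.upperCentralSeries_mono N (Nat.le_add_right 1 j) hxn1)
  have hx1 : x ∈ Subgroup.center N := by
    rw [← Subgroup.upperCentralSeries_one]; exact hdown m hxm
  exact hg ((QuotientGroup.eq_one_iff x).mpr hx1)
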